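/- Let 0 ≤ e < 1, define k(f) = 1 + e·cos f, let f₀ ∈ ℝ, and let J : ℝ → ℝ be differentiable with J'(f) = 1/k(f)² for all f. Define φ₂(f) = 3e²·k(f)·J(f)·sin f + k(f)·cos f − 2e. Then φ₂ is twice differentiable and φ₂''(f) + (4 − 3/k(f))·φ₂(f) = 0 for all f ∈ ℝ. -/

import Mathlib

/-- The second Yamanaka–Ankersen fundamental solution
`φ₂ = 3e²·k·J·sin f + k·cos f − 2e`, where `k = 1 + e·cos f` and `J' = 1/k²`,
solves the homogeneous decoupled radial Tschauner–Hempel equation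
`φ₂'' + (4 − 3/k)·φ₂ = 0`. -/
theorem stmt_4 (e : ℝ) (he0 : 0 ≤ e) (he1 : e < 1)
    (k : ℝ → ℝ) (hk : ∀ f, k f = 1 + e * Real.cos f)
    (J : ℝ → ℝ) (hJ : Differentiable ℝ J) (hJ' : ∀ f, deriv J f = 1 / (k f) ^ 2)
    (φ₂ : ℝ → ℝ)
    (hφ₂ : ∀ f, φ₂ f = 3 * e ^ 2 * k f * J f * Real.sin f + k f * Real.cos f - 2 * e) :
    Differentiable ℝ φ₂ ∧ Differentiable ℝ (deriv φ₂) ∧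
      ∀ f, deriv (deriv φ₂) f + (4 - 3 / k f) * φ₂ f = 0 := by
  have hkpos : ∀ f, 0 < 1 + e * Real.cos f := by
    intro f
    nlinarith [Real.neg_one_le_cos f, Real.cos_le_one f]
  have hk0 : ∀ f, (1 + e * Real.cos f) ≠ 0 := fun f => ne_of_gt (hkpos f)
  -- derivative of k (as explicit function)
  have hkd : ∀ f, HasDerivAt (fun x => 1 + e * Real.cos x) (-(e * Real.sin f)) f := by
    intro f
    simpa [mul_comm] using ((Real.hasDerivAt_cos f).const_mul e).const_add 1
  -- derivative of J
  have hJd : ∀ f, HasDerivAt J (1 / (1 + e * Real.cos f) ^ 2) f := by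
    intro f
    have := (hJ f).hasDerivAt
    rwa [hJ' f, hk f] at this
  have hphieq : φ₂ = fun f =>
      3 * e ^ 2 * ((1 + e * Real.cos f) * J f * Real.sin f)
        + (1 + e * Real.cos f) * Real.cos f - 2 * e := by
    funext f; rw [hφ₂ f, hk f]; ring
  set D1 : ℝ → ℝ := fun f =>
    3 * e ^ 2 * ((-(e * Real.sin f)) * J f * Real.sin f
        + (1 + e * Real.cos f) * J f * Real.cos f)
      + 3 * e ^ 2 * Real.sin f / (1 + e * Real.cos f)
      + (-(e * Real.sin f)) * Real.cos f + (1 + e * Real.cos f) * (-Real.sin f)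
    with hD1
  have hd1 : ∀ f, HasDerivAt φ₂ (D1 f) f := by
    intro f
    rw [hphieq]
    have h1 : HasDerivAt (fun x => 3 * e ^ 2 * ((1 + e * Real.cos x) * J x * Real.sin x))
        (3 * e ^ 2 * (((-(e * Real.sin f)) * J f + (1 + e * Real.cos f) * (1 / (1 + e * Real.cos f) ^ 2)) * Real.sin f
          + (1 + e * Real.cos f) * J f * Real.cos f)) f :=
      (((hkd f).mul (hJd f)).mul (Real.hasDerivAt_sin f)).const_mul (3 * e ^ 2)
    have h2 : HasDerivAt (fun x => (1 + e * Real.cos x) * Real.cos x)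
        ((-(e * Real.sin f)) * Real.cos f + (1 + e * Real.cos f) * (-Real.sin f)) f :=
      (hkd f).mul (Real.hasDerivAt_cos f)
    have := ((h1.add h2).sub_const (2 * e))
    refine this.congr_deriv ?_
    rw [hD1]
    have hkf := hk0 f
    field_simp
    ring
  have hD1diff : ∀ f, HasDerivAt D1
      (3 * e ^ 2 * (((-(e * Real.cos f)) * J f + (-(e * Real.sin f)) * (1 / (1 + e * Real.cos f) ^ 2)) * Real.sin f
          + (-(e * Real.sin f)) * J f * Real.cos f
          + ((-(e * Real.sin f)) * J f + (1 + e * Real.cos f) * (1 / (1 + e * Real.cos f) ^ 2)) * Real.cos f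
          + (1 + e * Real.cos f) * J f * (-Real.sin f))
        + (3 * e ^ 2 * Real.cos f * (1 + e * Real.cos f)
            - 3 * e ^ 2 * Real.sin f * (-(e * Real.sin f))) / (1 + e * Real.cos f) ^ 2
        + ((-(e * Real.cos f)) * Real.cos f + (-(e * Real.sin f)) * (-Real.sin f))
        + ((-(e * Real.sin f)) * (-Real.sin f) + (1 + e * Real.cos f) * (-Real.cos f))) f := by
    intro f
    have ha : HasDerivAt (fun x => 3 * e ^ 2 * ((-(e * Real.sin x)) * J x * Real.sin x
        + (1 + e * Real.cos x) * J x * Real.cos x))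
        (3 * e ^ 2 * (((-(e * Real.cos f)) * J f + (-(e * Real.sin f)) * (1 / (1 + e * Real.cos f) ^ 2)) * Real.sin f
          + (-(e * Real.sin f)) * J f * Real.cos f
          + (((-(e * Real.sin f)) * J f + (1 + e * Real.cos f) * (1 / (1 + e * Real.cos f) ^ 2)) * Real.cos f
          + (1 + e * Real.cos f) * J f * (-Real.sin f)))) f := by
      have hs : HasDerivAt (fun x => -(e * Real.sin x)) (-(e * Real.cos f)) f := by
        exact (((Real.hasDerivAt_sin f).const_mul e).neg)
      exact ((((hs.mul (hJd f)).mul (Real.hasDerivAt_sin f)).add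
        (((hkd f).mul (hJd f)).mul (Real.hasDerivAt_cos f))).const_mul (3 * e ^ 2))
    have hb : HasDerivAt (fun x => 3 * e ^ 2 * Real.sin x / (1 + e * Real.cos x))
        ((3 * e ^ 2 * Real.cos f * (1 + e * Real.cos f)
            - 3 * e ^ 2 * Real.sin f * (-(e * Real.sin f))) / (1 + e * Real.cos f) ^ 2) f :=
      ((Real.hasDerivAt_sin f).const_mul (3 * e ^ 2)).div (hkd f) (hk0 f)
    have hc : HasDerivAt (fun x => (-(e * Real.sin x)) * Real.cos x)
        ((-(e * Real.cos f)) * Real.cos f + (-(e * Real.sin f)) * (-Real.sin f)) f := by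
      have hs : HasDerivAt (fun x => -(e * Real.sin x)) (-(e * Real.cos f)) f := by
        exact (((Real.hasDerivAt_sin f).const_mul e).neg)
      exact hs.mul (Real.hasDerivAt_cos f)
    have hd : HasDerivAt (fun x => (1 + e * Real.cos x) * (-Real.sin x))
        ((-(e * Real.sin f)) * (-Real.sin f) + (1 + e * Real.cos f) * (-Real.cos f)) f := by
      have := (hkd f).mul ((Real.hasDerivAt_sin f).neg)
      exact this
    have := ((ha.add hb).add hc).add hd
    refine this.congr_deriv ?_
    ring
  have hderiv1 : deriv φ₂ = D1 := funext fun f => (hd1 f).deriv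
  refine ⟨fun f => (hd1 f).differentiableAt, ?_, ?_⟩
  · rw [hderiv1]; exact fun f => (hD1diff f).differentiableAt
  · intro f
    rw [hderiv1, (hD1diff f).deriv, hk f, hφ₂ f, hk f]
    have pyth := Real.sin_sq_add_cos_sq f
    have hkf := hk0 f
    field_simp
    linear_combination (2*e + 4*e^2*Real.cos f + 2*e^3*Real.cos f^2) * pyth
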